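/- arXiv:1307.1560 — 2 statements merged into one kernel-verified Lean document; each statement's English description precedes it below -/
import Mathlib

section
/- For every nonempty factor u of Z_k, compress(u) is first strictly increasing up to its (unique) maximum and then strictly decreasing: there is an index m such that compress(u) is strictly increasing on positions up to m and strictly decreasing from m on. -/
/-- Zimin words: `zimin 1 = [1]`, `zimin k = zimin (k-1) ++ [k] ++ zimin (k-1)`. -/
def zimin : ℕ → List ℕ
  | 0 => []
  | k + 1 => zimin k ++ [k + 1] ++ zimin k

/-- A sequence is `j`-interleaved if among each two adjacent elements exactly one equals `j`. -/
def Interleaved (j : ℕ) (u : List ℕ) : Prop :=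
  u.Chain' (fun a b => Xor' (a = j) (b = j))

/-- Delete from `u` all letters smaller than `j`. -/
def delBelow (j : ℕ) (u : List ℕ) : List ℕ :=
  u.filter (fun a => decide (j ≤ a))

/-- `compress u` removes every element of `u` that has a strictly larger element
both somewhere to its left and somewhere to its right. -/
def compress (u : List ℕ) : List ℕ :=
  (List.range u.length).filterMap fun i =>
    if ((u.take i).any fun l => decide (u.getD i 0 < l)) &&
       ((u.drop (i + 1)).any fun r => decide (u.getD i 0 < r))
    then none else some (u.getD i 0)

lemma zimin_le (k : ℕ) : ∀ x ∈ zimin k, x ≤ k := by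
  induction k with
  | zero => simp [zimin]
  | succ n ih =>
    intro x hx
    simp only [zimin, List.mem_append, List.mem_singleton] at hx
    rcases hx with (hx | hx) | hx
    · exact (ih x hx).trans (Nat.le_succ n)
    · omega
    · exact (ih x hx).trans (Nat.le_succ n)

lemma zimin_getD_le (k i : ℕ) : (zimin k).getD i 0 ≤ k := by
  by_cases h : i < (zimin k).length
  · rw [List.getD_eq_getElem _ _ h]
    exact zimin_le k _ (List.getElem_mem h)
  · rw [List.getD_eq_default _ _ (by omega)]
    exact Nat.zero_le k

lemma ziminS_getD (n i : ℕ) :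
    (zimin (n+1)).getD i 0 =
      if i < (zimin n).length then (zimin n).getD i 0
      else if i = (zimin n).length then n+1
      else (zimin n).getD (i - (zimin n).length - 1) 0 := by
  have h : zimin (n+1) = (zimin n ++ [n+1]) ++ zimin n := by simp [zimin]
  rw [h]
  by_cases h1 : i < (zimin n).length
  · rw [List.getD_append _ _ _ _ (by simp; omega), List.getD_append _ _ _ _ h1, if_pos h1]
  · rw [if_neg h1]
    by_cases h2 : i = (zimin n).length
    · rw [List.getD_append _ _ _ _ (by simp; omega), List.getD_append_right _ _ _ _ (by omega),
        if_pos h2, h2]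
      simp
    · rw [List.getD_append_right _ _ _ _ (by simp; omega), if_neg h2]
      congr 1
      simp
      omega

lemma zimin_sep (k : ℕ) : ∀ p q, p < q → q < (zimin k).length →
    (zimin k).getD p 0 = (zimin k).getD q 0 →
    ∃ r, p < r ∧ r < q ∧ (zimin k).getD p 0 < (zimin k).getD r 0 := by
  induction k with
  | zero => intro p q _ hq; simp [zimin] at hq
  | succ n ih =>
    intro p q hpq hq heq
    have hlen : (zimin (n+1)).length = (zimin n).length + 1 + (zimin n).length := by
      simp [zimin]; omega
    set L := (zimin n).length with hL
    rw [hlen] at hq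
    rcases lt_trichotomy q L with hqL | hqL | hqL
    · -- both in left copy
      have hpL : p < L := lt_trans hpq hqL
      rw [ziminS_getD, if_pos hpL, ziminS_getD, if_pos hqL] at heq
      obtain ⟨r, hr1, hr2, hr3⟩ := ih p q hpq hqL heq
      refine ⟨r, hr1, hr2, ?_⟩
      rw [ziminS_getD, if_pos hpL, ziminS_getD, if_pos (lt_trans hr2 hqL)]
      exact hr3
    · -- q is the middle
      exfalso
      have hpL : p < L := by omega
      rw [ziminS_getD, if_pos hpL, ziminS_getD, if_neg (by omega), if_pos hqL] at heq
      have := zimin_getD_le n p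
      omega
    · rcases lt_trichotomy p L with hpL | hpL | hpL
      · -- p left, q right (or middle excluded): middle works
        refine ⟨L, hpL, hqL, ?_⟩
        rw [ziminS_getD, if_pos hpL, ziminS_getD, if_neg (by omega), if_pos rfl]
        have := zimin_getD_le n p
        omega
      · -- p is the middle
        exfalso
        rw [ziminS_getD, if_neg (by omega), if_pos hpL, ziminS_getD, if_neg (by omega),
          if_neg (by omega)] at heq
        rw [← hL] at heq
        have := zimin_getD_le n (q - L - 1)
        omega
      · -- both right
        have e1 : (zimin (n+1)).getD p 0 = (zimin n).getD (p - L - 1) 0 := by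
          rw [ziminS_getD, if_neg (by omega), if_neg (by omega)]
        have e2 : (zimin (n+1)).getD q 0 = (zimin n).getD (q - L - 1) 0 := by
          rw [ziminS_getD, if_neg (by omega), if_neg (by omega)]
        rw [e1, e2] at heq
        obtain ⟨r, hr1, hr2, hr3⟩ := ih (p - L - 1) (q - L - 1) (by omega) (by omega) heq
        refine ⟨r + L + 1, by omega, by omega, ?_⟩
        rw [e1, ziminS_getD, if_neg (by omega), if_neg (by omega)]
        have : r + L + 1 - L - 1 = r := by omega
        rw [this]
        exact hr3

lemma factor_sep {k : ℕ} {u : List ℕ} (hf : u <:+: zimin k) :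
    ∀ a b, a < b → b < u.length → u.getD a 0 = u.getD b 0 →
      ∃ r, a < r ∧ r < b ∧ u.getD a 0 < u.getD r 0 := by
  obtain ⟨s, t, hst⟩ := hf
  have key : ∀ i, i < u.length → (zimin k).getD (s.length + i) 0 = u.getD i 0 := by
    intro i hi
    rw [← hst, List.append_assoc, List.getD_append_right _ _ _ _ (by omega)]
    have : s.length + i - s.length = i := by omega
    rw [this, List.getD_append _ _ _ _ hi]
  intro a b hab hb heq
  have ha : a < u.length := lt_trans hab hb
  have hqlen : s.length + b < (zimin k).length := by
    rw [← hst]; simp; omega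
  obtain ⟨r, hr1, hr2, hr3⟩ := zimin_sep k (s.length + a) (s.length + b) (by omega) hqlen
    (by rw [key a ha, key b hb, heq])
  refine ⟨r - s.length, by omega, by omega, ?_⟩
  rw [key a ha] at hr3
  rw [← key (r - s.length) (by omega)]
  have : s.length + (r - s.length) = r := by omega
  rw [this]
  exact hr3

lemma filterMap_if {α β : Type*} (p : α → Bool) (g : α → β) (l : List α) :
    l.filterMap (fun i => if p i then none else some (g i)) =
      (l.filter (fun i => !p i)).map g := by
  induction l with
  | nil => simp
  | cons a t ih =>
    by_cases h : p a <;> simp [List.filterMap_cons, h, ih]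

lemma compress_eq (u : List ℕ) :
    compress u = ((List.range u.length).filter (fun i =>
      !(((u.take i).any fun l => decide (u.getD i 0 < l)) &&
        ((u.drop (i + 1)).any fun r => decide (u.getD i 0 < r))))).map
      (fun i => u.getD i 0) :=
  filterMap_if _ _ _

lemma forall_take_iff {u : List ℕ} {i : ℕ} (hi : i ≤ u.length) (P : ℕ → Prop) :
    (∀ x ∈ u.take i, P x) ↔ ∀ j < i, P (u.getD j 0) := by
  constructor
  · intro h j hj
    have hjL : j < u.length := lt_of_lt_of_le hj hi
    have hjt : j < (u.take i).length := by simp; omega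
    have he : u.getD j 0 = (u.take i)[j]'hjt := by
      rw [List.getElem_take]; exact List.getD_eq_getElem _ _ hjL
    rw [he]
    exact h _ (List.getElem_mem hjt)
  · intro h x hx
    obtain ⟨j, hj, rfl⟩ := List.mem_iff_getElem.mp hx
    have hjt : j < i ∧ j < u.length := by
      have := hj; simp at this; omega
    rw [List.getElem_take, ← List.getD_eq_getElem u 0 hjt.2]
    exact h j hjt.1

lemma forall_drop_iff {u : List ℕ} {i : ℕ} (P : ℕ → Prop) :
    (∀ x ∈ u.drop (i+1), P x) ↔ ∀ j, i < j → j < u.length → P (u.getD j 0) := by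
  constructor
  · intro h j hj1 hj2
    have hjt : j - (i+1) < (u.drop (i+1)).length := by simp; omega
    have he : u.getD j 0 = (u.drop (i+1))[j - (i+1)]'hjt := by
      rw [List.getElem_drop]
      have hidx : i + 1 + (j - (i+1)) = j := by omega
      simp only [hidx]
      exact List.getD_eq_getElem _ _ hj2
    rw [he]
    exact h _ (List.getElem_mem hjt)
  · intro h x hx
    obtain ⟨j, hj, rfl⟩ := List.mem_iff_getElem.mp hx
    have hjL : i + 1 + j < u.length := by
      have := hj; simp at this; omega
    rw [List.getElem_drop, ← List.getD_eq_getElem u 0 hjL]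
    exact h (i + 1 + j) (by omega) hjL

lemma compress_structure (u : List ℕ) :
    ∃ s : List ℕ, compress u = s.map (fun i => u.getD i 0) ∧
      s.Pairwise (· < ·) ∧
      ∀ i, i ∈ s ↔ i < u.length ∧
        ((∀ j < i, u.getD j 0 ≤ u.getD i 0) ∨
         (∀ j, i < j → j < u.length → u.getD j 0 ≤ u.getD i 0)) := by
  refine ⟨_, compress_eq u, List.Pairwise.filter _ List.pairwise_lt_range, ?_⟩
  intro i
  rw [List.mem_filter, List.mem_range]
  simp only [Bool.not_eq_true', Bool.and_eq_false_iff, List.any_eq_false, decide_eq_true_eq,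
    not_lt]
  constructor
  · rintro ⟨h1, h2 | h2⟩
    · exact ⟨h1, Or.inl ((forall_take_iff (le_of_lt h1) _).mp h2)⟩
    · exact ⟨h1, Or.inr ((forall_drop_iff _).mp h2)⟩
  · rintro ⟨h1, h2 | h2⟩
    · exact ⟨h1, Or.inl ((forall_take_iff (le_of_lt h1) _).mpr h2)⟩
    · exact ⟨h1, Or.inr ((forall_drop_iff _).mpr h2)⟩

/-- For every nonempty factor `u` of `Z_k`, `compress u` is strictly increasing up to
its maximum position `m` and strictly decreasing from `m` on. -/
theorem compress_unimodal (k : ℕ) (u : List ℕ) (hu : u ≠ []) (hf : u <:+: zimin k) :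
    ∃ m < (compress u).length,
      (∀ i j, i < j → j ≤ m → (compress u).getD i 0 < (compress u).getD j 0) ∧
      (∀ i j, m ≤ i → i < j → j < (compress u).length →
        (compress u).getD j 0 < (compress u).getD i 0) := by
  classical
  obtain ⟨s, hcomp, hpair, hmem⟩ := compress_structure u
  have hsep := factor_sep hf
  have hLpos : 0 < u.length := List.length_pos_iff.mpr hu
  obtain ⟨p, hp, hpmax⟩ : ∃ p < u.length, ∀ j < u.length, u.getD j 0 ≤ u.getD p 0 := by
    obtain ⟨p, hp, hmax⟩ := Finset.exists_max_image (Finset.range u.length)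
      (fun i => u.getD i 0) ⟨0, Finset.mem_range.mpr hLpos⟩
    exact ⟨p, Finset.mem_range.mp hp, fun j hj => hmax j (Finset.mem_range.mpr hj)⟩
  have hpuniq : ∀ j < u.length, j ≠ p → u.getD j 0 < u.getD p 0 := by
    intro j hj hne
    rcases lt_or_gt_of_ne hne with h | h
    · by_contra hcon
      have heq : u.getD j 0 = u.getD p 0 := le_antisymm (hpmax j hj) (not_lt.mp hcon)
      obtain ⟨r, hr1, hr2, hr3⟩ := hsep j p h hp heq
      have := hpmax r (by omega)
      omega
    · by_contra hcon
      have heq : u.getD p 0 = u.getD j 0 :=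
        le_antisymm (le_of_not_gt hcon) (hpmax j hj)
      obtain ⟨r, hr1, hr2, hr3⟩ := hsep p j h hj heq
      have := hpmax r (by omega)
      omega
  have hps : p ∈ s := (hmem p).mpr ⟨hp, Or.inl (fun j _ => hpmax j (by omega))⟩
  have hsm' : ∀ j (hj : j < s.length), j = s.idxOf p → s[j]'hj = p := by
    intro j hj hjm
    subst hjm
    exact List.getElem_idxOf hj
  set m := s.idxOf p with hm
  have hmlen : m < s.length := List.idxOf_lt_length_iff.mpr hps
  have hlen : (compress u).length = s.length := by rw [hcomp, List.length_map]
  have hmono := List.pairwise_iff_getElem.mp hpair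
  have hgetD : ∀ j (hj : j < s.length), (compress u).getD j 0 = u.getD (s[j]'hj) 0 := by
    intro j hj
    rw [hcomp, List.getD_eq_getElem _ _ (by simpa using hj), List.getElem_map]
  have hleft : ∀ a b, a ∈ s → b ∈ s → a < b → b ≤ p → u.getD a 0 < u.getD b 0 := by
    intro a b has hbs hab hbp
    obtain ⟨hbL, hb2⟩ := (hmem b).mp hbs
    rcases eq_or_lt_of_le hbp with h | h
    · rw [h]
      exact hpuniq a (by omega) (by omega)
    · have hbp' : u.getD b 0 < u.getD p 0 := hpuniq b hbL (by omega)
      have hLrec : ∀ j < b, u.getD j 0 ≤ u.getD b 0 := by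
        rcases hb2 with h2 | h2
        · exact h2
        · exact absurd (h2 p h hp) (by omega)
      have hle := hLrec a hab
      rcases eq_or_lt_of_le hle with heq | hlt
      · obtain ⟨r, hr1, hr2, hr3⟩ := hsep a b hab hbL heq
        have := hLrec r hr2
        omega
      · exact hlt
  have hright : ∀ a b, a ∈ s → b ∈ s → p ≤ a → a < b → u.getD b 0 < u.getD a 0 := by
    intro a b has hbs hpa hab
    obtain ⟨haL, ha2⟩ := (hmem a).mp has
    obtain ⟨hbL, _⟩ := (hmem b).mp hbs
    rcases eq_or_lt_of_le hpa with h | h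
    · rw [← h]
      exact hpuniq b hbL (by omega)
    · have hap' : u.getD a 0 < u.getD p 0 := hpuniq a haL (by omega)
      have hRrec : ∀ j, a < j → j < u.length → u.getD j 0 ≤ u.getD a 0 := by
        rcases ha2 with h2 | h2
        · exact absurd (h2 p h) (by omega)
        · exact h2
      have hle := hRrec b hab hbL
      rcases eq_or_lt_of_le hle with heq | hlt
      · obtain ⟨r, hr1, hr2, hr3⟩ := hsep a b hab hbL heq.symm
        have := hRrec r hr1 (by omega)
        omega
      · exact hlt
  refine ⟨m, by rw [hlen]; exact hmlen, ?_, ?_⟩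
  · intro i j hij hjm
    have hjs : j < s.length := lt_of_le_of_lt hjm hmlen
    have his : i < s.length := lt_trans hij hjs
    rw [hgetD i his, hgetD j hjs]
    apply hleft _ _ (List.getElem_mem his) (List.getElem_mem hjs) (hmono i j his hjs hij)
    rcases eq_or_lt_of_le hjm with h | h
    · exact le_of_eq (hsm' j hjs h)
    · have h1 := hmono j m hjs hmlen h
      have h2 := hsm' m hmlen rfl
      omega
  · intro i j hmi hij hjc
    rw [hlen] at hjc
    have his : i < s.length := lt_trans hij hjc
    rw [hgetD i his, hgetD j hjc]
    apply hright _ _ (List.getElem_mem his) (List.getElem_mem hjc) ?_ (hmono i j his hjc hij)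
    rcases eq_or_lt_of_le hmi with h | h
    · exact le_of_eq (hsm' i his h.symm).symm
    · have h1 := hmono m i hmlen his h
      have h2 := hsm' m hmlen rfl
      omega
end

section
/- If π occurs in Z_k via a non-erasing morphism h, then the set V_1 of variables of rank 1 under h is a free set for π: there exist sets A, B ⊆ V with V_1 ⊆ B \ A such that for every two-letter factor xy of π, x ∈ A if and only if y ∈ B. -/
lemma zimin_ne_nil (k : ℕ) : zimin (k + 1) ≠ [] := by
  simp [zimin]

lemma le_foldr_max : ∀ {l : List ℕ} {a : ℕ}, a ∈ l → a ≤ l.foldr max 0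
  | b :: l, a, hm => by
    rcases List.mem_cons.1 hm with rfl | hm
    · exact le_max_left _ _
    · exact le_trans (le_foldr_max hm) (le_max_right _ _)

lemma zimin_spec (k : ℕ) :
    (zimin k).Chain' (fun a b => Xor' (a = 1) (b = 1)) ∧
    (∀ a ∈ (zimin k).head?, a = 1) ∧ (∀ a ∈ (zimin k).getLast?, a = 1) := by
  induction k with
  | zero => simp [zimin, List.Chain']
  | succ k ih =>
    obtain ⟨hc, hh, hl⟩ := ih
    cases k with
    | zero => simp [zimin, Xor', List.Chain']
    | succ m =>
      have hne := zimin_ne_nil m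
      have heq : zimin (m + 2) = zimin (m + 1) ++ ([m + 2] ++ zimin (m + 1)) := by
        simp [zimin]
      refine ⟨?_, ?_, ?_⟩
      · rw [heq, List.Chain', List.isChain_append]
        refine ⟨hc, ?_, ?_⟩
        · rw [List.singleton_append, List.isChain_cons]
          refine ⟨fun b hb => ?_, hc⟩
          have := hh b hb
          subst this
          exact Or.inr ⟨rfl, by omega⟩
        · intro x hx y hy
          have hx1 := hl x hx
          simp at hy
          subst hx1; subst hy
          exact Or.inl ⟨rfl, by omega⟩
      · intro a ha
        obtain ⟨c, l, hcl⟩ := List.exists_cons_of_ne_nil hne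
        rw [heq, hcl] at ha
        simp at ha
        exact hh a (by rw [hcl]; simp [ha])
      · intro a ha
        rw [heq, ← List.append_assoc, List.getLast?_append,
          List.getLast?_eq_getLast hne] at ha
        simp at ha
        exact hl a (by rw [List.getLast?_eq_getLast hne, ha]; rfl)

/-- If `π` occurs in `Z_k` via a non-erasing morphism `h`, then the set of variables of
rank 1 under `h` is a free set for `π`. -/
theorem rank_one_free_set {V : Type*} (k : ℕ) (π : List V) (h : V → List ℕ)
    (hne : ∀ x, h x ≠ []) (halph : ∀ x, ∀ a ∈ h x, 1 ≤ a ∧ a ≤ k)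
    (hocc : ((π.map h).flatten) <:+: zimin k) :
    ∃ A B : Set V, {x | (h x).foldr max 0 = 1} ⊆ B \ A ∧
      ∀ x y : V, [x, y] <:+: π → (x ∈ A ↔ y ∈ B) := by
  classical
  refine ⟨{x | ¬ (h x).getLast? = some 1}, {x | (h x).head? = some 1}, ?_, ?_⟩
  · intro x hx
    have hmax : (h x).foldr max 0 = 1 := hx
    have hall : ∀ a ∈ h x, a = 1 := by
      intro a ha
      have h1 := (halph x a ha).1
      have h2 : a ≤ (h x).foldr max 0 := le_foldr_max ha
      omega
    constructor
    · show (h x).head? = some 1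
      cases hx' : h x with
      | nil => exact absurd hx' (hne x)
      | cons b l =>
        have : b = 1 := hall b (by rw [hx']; exact List.mem_cons_self)
        simp [this]
    · show ¬ ¬ (h x).getLast? = some 1
      rw [not_not]
      have hlm : (h x).getLast (hne x) ∈ h x := List.getLast_mem (hne x)
      rw [List.getLast?_eq_getLast (hne x)]
      exact congrArg some (hall _ hlm)
  · intro x y hxy
    obtain ⟨s, t, hst⟩ := hxy
    have hinf : (h x ++ h y) <:+: (π.map h).flatten := by
      refine ⟨(s.map h).flatten, (t.map h).flatten, ?_⟩
      rw [← hst]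
      simp
    have hchain : (h x ++ h y).Chain' (fun a b => Xor' (a = 1) (b = 1)) :=
      ((zimin_spec k).1.infix hocc).infix hinf
    rw [List.Chain', List.isChain_append] at hchain
    obtain ⟨-, -, hbd⟩ := hchain
    obtain ⟨l, hl⟩ := List.getLast?_isSome.2 (hne x) |> Option.isSome_iff_exists.1
    obtain ⟨b, hb⟩ := List.isSome_head?.2 (hne y) |> Option.isSome_iff_exists.1
    have hx := hbd l hl b hb
    show ¬ (h x).getLast? = some 1 ↔ (h y).head? = some 1
    rw [hl, hb]
    rcases hx with ⟨h1, h2⟩ | ⟨h1, h2⟩ <;> simp_all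
end
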